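/- arXiv:1801.02370 — 6 statements merged into one kernel-verified Lean document; each statement's English description precedes it below -/
import Mathlib

section
/- Let Δ be an integer at least 2 and let G be a finite, connected graph of maximum degree at most Δ. Then the cat can localize a 4Δ-slow mouse up to distance 0 on G; that is, there is a strategy σ such that for every 4Δ-slow game in which the cat follows σ there is some i ≥ 1 with rad_G(M_i) ≤ 0 (equivalently, M_i = {m_i}). -/
open SimpleGraph

/-- A `k`-slow mouse walk on `G` (0-indexed time): each position belongs to the
closed neighborhood of the previous one, and the mouse may only move at time
steps `i` with `(i − 1) ≡ 0 (mod k)` (in 1-indexed terms). -/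
def IsSlowMouseWalk {V : Type*} (G : SimpleGraph V) (k : ℕ) (m : ℕ → V) : Prop :=
  (∀ i : ℕ, m (i + 1) = m i ∨ G.Adj (m i) (m (i + 1))) ∧
    ∀ i : ℕ, ¬ k ∣ (i + 1) → m (i + 1) = m i

/-- The bit the cat learns in (0-indexed) round `i ≥ 1`:
`true` iff `dist(cᵢ, mᵢ) ≤ dist(cᵢ₋₁, mᵢ₋₁)`. -/
noncomputable def gameBit {V : Type*} (G : SimpleGraph V) (c m : ℕ → V) (i : ℕ) : Bool :=
  decide (G.dist (c i) (m i) ≤ G.dist (c (i - 1)) (m (i - 1)))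

/-- The cat follows the strategy `(c₁, c₂; f)`: its first two probes are `c₁, c₂`,
and every later probe is determined by `f` applied to the bits learned so far. -/
def FollowsStrategy {V : Type*} (G : SimpleGraph V) (c m : ℕ → V)
    (c₁ c₂ : V) (f : (n : ℕ) → (Fin n → Bool) → V) : Prop :=
  c 0 = c₁ ∧ c 1 = c₂ ∧
    ∀ i : ℕ, c (i + 2) = f (i + 1) (fun j => gameBit G c m (j.val + 1))

/-- The set `Mᵢ` of possible positions of a `k`-slow mouse consistent with the
information available to the cat after (0-indexed) round `i`. -/
def slowMouseSet {V : Type*} (G : SimpleGraph V) (k : ℕ) (c m : ℕ → V) (i : ℕ) : Set V :=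
  {u | ∃ mt : ℕ → V, mt i = u ∧
    (∀ j : ℕ, j < i → (mt (j + 1) = mt j ∨ G.Adj (mt j) (mt (j + 1)))) ∧
    (∀ j : ℕ, j < i → ¬ k ∣ (j + 1) → mt (j + 1) = mt j) ∧
    ∀ j : ℕ, 1 ≤ j → j ≤ i →
      ((G.dist (c j) (mt j) ≤ G.dist (c (j - 1)) (mt (j - 1))) ↔ gameBit G c m j = true)}

/-- The cat can localize a `k`-slow mouse up to distance `d` on `G`: there is a
strategy such that in every `k`-slow game in which the cat follows it, at some
round `i` the set `Mᵢ` has radius at most `d`. -/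
def CanLocalizeSlow {V : Type*} (G : SimpleGraph V) (k d : ℕ) : Prop :=
  ∃ (c₁ c₂ : V) (f : (n : ℕ) → (Fin n → Bool) → V),
    ∀ m c : ℕ → V, IsSlowMouseWalk G k m → FollowsStrategy G c m c₁ c₂ f →
      ∃ i : ℕ, ∃ u : V, ∀ x ∈ slowMouseSet G k c m i, G.dist u x ≤ d

set_option linter.unusedSectionVars false
namespace CatMouseAux

lemma exists_adj_dist {V : Type*} {G : SimpleGraph V} (hG : G.Connected) {u v : V}
    (h : u ≠ v) : ∃ w, G.Adj u w ∧ G.dist w v + 1 = G.dist u v := by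
  obtain ⟨p, hp⟩ := (hG u v).exists_walk_length_eq_dist
  cases p with
  | nil => exact absurd rfl h
  | cons ha q =>
    rename_i w
    refine ⟨w, ha, ?_⟩
    have h1 : G.dist w v ≤ q.length := SimpleGraph.dist_le q
    have h2 : G.dist u v ≤ G.dist u w + G.dist w v := hG.dist_triangle
    have h3 : G.dist u w ≤ 1 := by
      have := SimpleGraph.dist_le ha.toWalk
      simpa using this
    simp only [SimpleGraph.Walk.length_cons] at hp
    omega

lemma find?_congr {α : Type*} (p q : α → Bool) (L : List α) (h : ∀ x ∈ L, p x = q x) :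
    L.find? p = L.find? q := by
  induction L with
  | nil => rfl
  | cons a L ih =>
    simp only [List.find?_cons]
    rw [h a (by simp)]
    cases q a with
    | true => rfl
    | false => exact ih (fun x hx => h x (List.mem_cons_of_mem _ hx))

variable {V : Type*} [Fintype V] [DecidableEq V] (G : SimpleGraph V) [DecidableRel G.Adj]

noncomputable def nbrs (u : V) : List V := (G.neighborFinset u).toList

lemma mem_nbrs {u x : V} : x ∈ nbrs G u ↔ G.Adj u x := by
  rw [nbrs, Finset.mem_toList, mem_neighborFinset]

lemma length_nbrs (u : V) : (nbrs G u).length = G.degree u := by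
  rw [nbrs, Finset.length_toList]; rfl

def P1 (b : ℕ → Bool) (T s : ℕ) : Bool := b (T + 2*s + 1) && !(b (T + 2*s + 2))

def P2 (b : ℕ → Bool) (Δ T t : ℕ) : Bool := b (T + 2*Δ + 2 + 2*t) && !(b (T + 2*Δ + 3 + 2*t))

noncomputable def scan1 (b : ℕ → Bool) (u : V) (T : ℕ) : Option ℕ :=
  (List.range (nbrs G u).length).find? (P1 b T)

noncomputable def scan2 (b : ℕ → Bool) (w u : V) (Δ T : ℕ) : Option ℕ :=
  (List.range ((nbrs G w).erase u).length).find? (P2 b Δ T)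

noncomputable def nextBase (b : ℕ → Bool) (Δ : ℕ) (u : V) (T : ℕ) : V :=
  match scan1 G b u T with
  | none => u
  | some s =>
    match scan2 G b ((nbrs G u).getD s u) u Δ T with
    | none => (nbrs G u).getD s u
    | some t => ((nbrs G ((nbrs G u).getD s u)).erase u).getD t ((nbrs G u).getD s u)

noncomputable def base (b : ℕ → Bool) (Δ : ℕ) (v₀ : V) : ℕ → V
  | 0 => v₀
  | j+1 => nextBase G b Δ (base b Δ v₀ j) (j*(4*Δ))

noncomputable def probe (b : ℕ → Bool) (Δ : ℕ) (v₀ : V) (t : ℕ) : V :=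
  let j := t / (4*Δ)
  let r := t % (4*Δ)
  let u := base G b Δ v₀ j
  if r ≤ 2*Δ then
    if r % 2 = 0 then u else (nbrs G u).getD ((r-1)/2) u
  else
    match scan1 G b u (j*(4*Δ)) with
    | none => u
    | some s =>
      if (r - (2*Δ+2)) % 2 = 0 ∧ r ≠ 2*Δ+1 then
        ((nbrs G ((nbrs G u).getD s u)).erase u).getD ((r - (2*Δ+2))/2) ((nbrs G u).getD s u)
      else (nbrs G u).getD s u


section Eval
variable {Δ j r : ℕ} (b : ℕ → Bool) (v₀ : V)

lemma div_block (hΔ : 1 ≤ Δ) (hr : r < 4*Δ) : (j*(4*Δ)+r)/(4*Δ) = j := by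
  rw [mul_comm j, Nat.mul_add_div (by omega), Nat.div_eq_of_lt hr]; omega

lemma mod_block (hr : r < 4*Δ) : (j*(4*Δ)+r) % (4*Δ) = r := by
  rw [mul_comm j, Nat.mul_add_mod, Nat.mod_eq_of_lt hr]

lemma probe_even (hΔ : 1 ≤ Δ) (hs : r ≤ 2*Δ) (hr2 : r % 2 = 0) :
    probe G b Δ v₀ (j*(4*Δ)+r) = base G b Δ v₀ j := by
  have hd := div_block (j:=j) (r:=r) hΔ (by omega)
  have hm := mod_block (j:=j) (r:=r) (Δ:=Δ) (by omega)
  simp only [probe, hd, hm]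
  rw [if_pos hs, if_pos hr2]

lemma probe_odd (hΔ : 1 ≤ Δ) {s : ℕ} (hs : s < Δ) :
    probe G b Δ v₀ (j*(4*Δ)+(2*s+1)) =
      (nbrs G (base G b Δ v₀ j)).getD s (base G b Δ v₀ j) := by
  have hd := div_block (j:=j) (r:=2*s+1) hΔ (by omega)
  have hm := mod_block (j:=j) (r:=2*s+1) (Δ:=Δ) (by omega)
  simp only [probe, hd, hm]
  rw [if_pos (by omega), if_neg (by omega)]
  congr 1 <;> omega

lemma probe_w (hΔ : 2 ≤ Δ) {s t : ℕ} (ht : t ≤ Δ - 1)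
    (hscan : scan1 G b (base G b Δ v₀ j) (j*(4*Δ)) = some s) :
    probe G b Δ v₀ (j*(4*Δ)+(2*Δ+1+2*t)) =
      (nbrs G (base G b Δ v₀ j)).getD s (base G b Δ v₀ j) := by
  have hd := div_block (j:=j) (r:=2*Δ+1+2*t) (Δ:=Δ) (by omega) (by omega)
  have hm := mod_block (j:=j) (r:=2*Δ+1+2*t) (Δ:=Δ) (by omega)
  simp only [probe, hd, hm, hscan]
  rw [if_neg (by omega), if_neg]
  rcases Nat.eq_zero_or_pos t with h0 | h0
  · subst h0; omega
  · intro ⟨h1, _⟩; omega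

lemma probe_x (hΔ : 2 ≤ Δ) {s t : ℕ} (ht : t ≤ Δ - 2)
    (hscan : scan1 G b (base G b Δ v₀ j) (j*(4*Δ)) = some s) :
    probe G b Δ v₀ (j*(4*Δ)+(2*Δ+2+2*t)) =
      ((nbrs G ((nbrs G (base G b Δ v₀ j)).getD s (base G b Δ v₀ j))).erase
          (base G b Δ v₀ j)).getD t
        ((nbrs G (base G b Δ v₀ j)).getD s (base G b Δ v₀ j)) := by
  have hd := div_block (j:=j) (r:=2*Δ+2+2*t) (Δ:=Δ) (by omega) (by omega)
  have hm := mod_block (j:=j) (r:=2*Δ+2+2*t) (Δ:=Δ) (by omega)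
  simp only [probe, hd, hm, hscan]
  rw [if_neg (by omega), if_pos (by constructor <;> omega)]
  congr 1 <;> omega

end Eval

section Congr
variable {Δ n T : ℕ} {b b' : ℕ → Bool} {v₀ : V}

lemma scan1_congr (u : V) (hb : ∀ i, 1 ≤ i → i < n → b i = b' i)
    (hn : T + 2*(nbrs G u).length < n) :
    scan1 G b u T = scan1 G b' u T := by
  apply find?_congr
  intro s hs
  rw [List.mem_range] at hs
  unfold P1
  rw [hb (T+2*s+1) (by omega) (by omega), hb (T+2*s+2) (by omega) (by omega)]

lemma scan2_congr (w u : V) (hb : ∀ i, 1 ≤ i → i < n → b i = b' i)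
    (hn : T + 2*Δ + 1 + 2*((nbrs G w).erase u).length < n) :
    scan2 G b w u Δ T = scan2 G b' w u Δ T := by
  apply find?_congr
  intro t ht
  rw [List.mem_range] at ht
  unfold P2
  rw [hb (T+2*Δ+2+2*t) (by omega) (by omega), hb (T+2*Δ+3+2*t) (by omega) (by omega)]

lemma nextBase_congr (hΔ : 2 ≤ Δ) (hdeg : ∀ v : V, G.degree v ≤ Δ) (u : V)
    (hb : ∀ i, 1 ≤ i → i < n → b i = b' i) (hn : T + 4*Δ ≤ n) :
    nextBase G b Δ u T = nextBase G b' Δ u T := by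
  have hlen : (nbrs G u).length ≤ Δ := by rw [length_nbrs]; exact hdeg u
  have h1 : scan1 G b u T = scan1 G b' u T :=
    scan1_congr G u hb (by omega)
  rw [nextBase, nextBase, h1]
  cases hscan : scan1 G b' u T with
  | none => rfl
  | some s =>
    have hs : s < (nbrs G u).length := by
      have := List.mem_of_find?_eq_some hscan
      rwa [List.mem_range] at this
    have hwmem : (nbrs G u).getD s u ∈ nbrs G u := by
      rw [List.getD_eq_getElem?_getD, List.getElem?_eq_getElem hs]
      exact List.getElem_mem hs
    have hadj : G.Adj u ((nbrs G u).getD s u) := (mem_nbrs G).mp hwmem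
    have humem : u ∈ nbrs G ((nbrs G u).getD s u) := (mem_nbrs G).mpr hadj.symm
    have hlen2 : ((nbrs G ((nbrs G u).getD s u)).erase u).length ≤ Δ - 1 := by
      rw [List.length_erase_of_mem humem, length_nbrs]
      have := hdeg ((nbrs G u).getD s u)
      omega
    have h2 : scan2 G b ((nbrs G u).getD s u) u Δ T =
        scan2 G b' ((nbrs G u).getD s u) u Δ T :=
      scan2_congr G _ u hb (by omega)
    simp only [h2]

lemma base_congr (hΔ : 2 ≤ Δ) (hdeg : ∀ v : V, G.degree v ≤ Δ)
    (hb : ∀ i, 1 ≤ i → i < n → b i = b' i) :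
    ∀ j, j*(4*Δ) ≤ n → base G b Δ v₀ j = base G b' Δ v₀ j := by
  intro j
  induction j with
  | zero => intro _; rfl
  | succ j ih =>
    intro hj
    rw [base, base, ih (by nlinarith)]
    exact nextBase_congr G hΔ hdeg _ hb (by nlinarith)

lemma probe_congr (hΔ : 2 ≤ Δ) (hdeg : ∀ v : V, G.degree v ≤ Δ) {t : ℕ}
    (hb : ∀ i, 1 ≤ i → i < t → b i = b' i) :
    probe G b Δ v₀ t = probe G b' Δ v₀ t := by
  have hk : 0 < 4*Δ := by omega
  obtain ⟨j, r, hrk, rfl⟩ : ∃ j r, r < 4*Δ ∧ t = j*(4*Δ) + r :=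
    ⟨t/(4*Δ), t%(4*Δ), Nat.mod_lt _ hk, by
      rw [mul_comm]; exact (Nat.div_add_mod t (4*Δ)).symm⟩
  have hd := div_block (j:=j) (r:=r) (Δ:=Δ) (by omega) hrk
  have hm := mod_block (j:=j) (r:=r) (Δ:=Δ) hrk
  have hbase : base G b Δ v₀ j = base G b' Δ v₀ j :=
    base_congr G hΔ hdeg hb j (by omega)
  simp only [probe, hd, hm, hbase]
  by_cases hle : r ≤ 2*Δ
  · rw [if_pos hle, if_pos hle]
  · have hlen : (nbrs G (base G b' Δ v₀ j)).length ≤ Δ := by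
      rw [length_nbrs]; exact hdeg _
    have h1 : scan1 G b (base G b' Δ v₀ j) (j*(4*Δ)) =
        scan1 G b' (base G b' Δ v₀ j) (j*(4*Δ)) :=
      scan1_congr G _ hb (by omega)
    rw [if_neg hle, if_neg hle, h1]

end Congr

variable {V : Type*} [Fintype V] [DecidableEq V] (G : SimpleGraph V) [DecidableRel G.Adj]

section Analysis
variable {Δ : ℕ} {b : ℕ → Bool} {v₀ : V} {m c : ℕ → V}

lemma mouse_const (hΔ : 2 ≤ Δ) (hm : IsSlowMouseWalk G (4*Δ) m) (j : ℕ) :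
    ∀ r, r < 4*Δ → m (j*(4*Δ)+r) = m (j*(4*Δ)) := by
  intro r
  induction r with
  | zero => intro _; rfl
  | succ r ih =>
    intro hr
    have hT : (4*Δ) ∣ j*(4*Δ) := ⟨j, by ring⟩
    have hnd : ¬ (4*Δ) ∣ (j*(4*Δ) + r + 1) := by
      intro hdvd
      have h2 : (4*Δ) ∣ (r + 1) := (Nat.dvd_add_right hT).mp hdvd
      have := Nat.le_of_dvd (by omega) h2
      omega
    have h1 := hm.2 (j*(4*Δ)+r) hnd
    calc m (j*(4*Δ)+(r+1)) = m (j*(4*Δ)+r) := h1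
    _ = m (j*(4*Δ)) := ih (by omega)

lemma mouse_step (hΔ : 2 ≤ Δ) (hm : IsSlowMouseWalk G (4*Δ) m) (j : ℕ) :
    G.dist (m (j*(4*Δ))) (m ((j+1)*(4*Δ))) ≤ 1 := by
  have he : (j+1)*(4*Δ) = (j*(4*Δ) + (4*Δ-1)) + 1 := by ring_nf; omega
  have h1 : m (j*(4*Δ) + (4*Δ-1)) = m (j*(4*Δ)) := mouse_const G hΔ hm j _ (by omega)
  rcases hm.1 (j*(4*Δ) + (4*Δ-1)) with h | h
  · rw [he, h, h1, SimpleGraph.dist_self]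
    exact Nat.zero_le _
  · rw [h1] at h
    rw [he]
    exact le_of_eq (SimpleGraph.dist_eq_one_iff_adj.mpr h)



lemma bit_eq (hΔ : 2 ≤ Δ) (hm : IsSlowMouseWalk G (4*Δ) m)
    (hb : b = fun t => gameBit G c m t) (j r : ℕ) (h1 : 1 ≤ r) (h2 : r < 4*Δ) :
    (b (j*(4*Δ)+r) = true ↔
      G.dist (c (j*(4*Δ)+r)) (m (j*(4*Δ))) ≤ G.dist (c (j*(4*Δ)+r-1)) (m (j*(4*Δ)))) := by
  have e1 : j*(4*Δ)+r-1 = j*(4*Δ)+(r-1) := by omega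
  have e2 : m (j*(4*Δ)+r) = m (j*(4*Δ)) := mouse_const G hΔ hm j r h2
  have e3 : m (j*(4*Δ)+(r-1)) = m (j*(4*Δ)) := mouse_const G hΔ hm j (r-1) (by omega)
  rw [hb]
  simp only [gameBit, decide_eq_true_eq, e1, e2, e3]

lemma P1_iff (hΔ : 2 ≤ Δ) (hdeg : ∀ v : V, G.degree v ≤ Δ)
    (hm : IsSlowMouseWalk G (4*Δ) m) (hb : b = fun t => gameBit G c m t)
    (hc : ∀ t, c t = probe G b Δ v₀ t) (j : ℕ) {s : ℕ}
    (hs : s < (nbrs G (base G b Δ v₀ j)).length) :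
    (P1 b (j*(4*Δ)) s = true ↔
      G.dist ((nbrs G (base G b Δ v₀ j)).getD s (base G b Δ v₀ j)) (m (j*(4*Δ)))
        < G.dist (base G b Δ v₀ j) (m (j*(4*Δ)))) := by
  have hlen : (nbrs G (base G b Δ v₀ j)).length ≤ Δ := by rw [length_nbrs]; exact hdeg _
  have hsΔ : s < Δ := by omega
  have hc1 : c (j*(4*Δ)+(2*s+1)) = (nbrs G (base G b Δ v₀ j)).getD s (base G b Δ v₀ j) := by
    rw [hc]; exact probe_odd G b v₀ (by omega) hsΔ
  have hc0 : c (j*(4*Δ)+2*s) = base G b Δ v₀ j := by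
    rw [hc]; exact probe_even G b v₀ (by omega) (by omega) (by omega)
  have hc2 : c (j*(4*Δ)+(2*s+2)) = base G b Δ v₀ j := by
    rw [hc]; exact probe_even G b v₀ (Δ:=Δ) (j:=j) (r:=2*s+2) (by omega) (by omega) (by omega)
  have hb1 := bit_eq G hΔ hm hb j (2*s+1) (by omega) (by omega)
  have hb2 := bit_eq G hΔ hm hb j (2*s+2) (by omega) (by omega)
  have e1 : j*(4*Δ)+(2*s+1)-1 = j*(4*Δ)+2*s := by omega
  have e2 : j*(4*Δ)+(2*s+2)-1 = j*(4*Δ)+(2*s+1) := by omega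
  rw [e1] at hb1
  rw [e2] at hb2
  rw [hc1, hc0] at hb1
  rw [hc2, hc1] at hb2
  unfold P1
  rw [show j*(4*Δ)+2*s+1 = j*(4*Δ)+(2*s+1) from by omega,
    show j*(4*Δ)+2*s+2 = j*(4*Δ)+(2*s+2) from by omega,
    Bool.and_eq_true, Bool.not_eq_true']
  constructor
  · rintro ⟨ha, hb'⟩
    have hle := hb1.mp ha
    have hnle : ¬ (G.dist (base G b Δ v₀ j) (m (j*(4*Δ))) ≤
        G.dist ((nbrs G (base G b Δ v₀ j)).getD s (base G b Δ v₀ j)) (m (j*(4*Δ)))) := by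
      intro hx
      rw [hb2.mpr hx] at hb'
      exact absurd hb' (by simp)
    omega
  · intro h
    refine ⟨hb1.mpr (by omega), ?_⟩
    rcases Bool.eq_false_or_eq_true (b (j*(4*Δ)+(2*s+2))) with ht | hf
    · have := hb2.mp ht; omega
    · exact hf

lemma getD_eq_getElem' {α : Type*} {L : List α} {s : ℕ} (h : s < L.length) (d : α) :
    L.getD s d = L[s] := by
  simp [List.getD_eq_getElem?_getD, List.getElem?_eq_getElem h]

lemma P2_iff (hΔ : 2 ≤ Δ) (hdeg : ∀ v : V, G.degree v ≤ Δ)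
    (hm : IsSlowMouseWalk G (4*Δ) m) (hb : b = fun t => gameBit G c m t)
    (hc : ∀ t, c t = probe G b Δ v₀ t) (j : ℕ) {s : ℕ}
    (hscan1 : scan1 G b (base G b Δ v₀ j) (j*(4*Δ)) = some s) {t : ℕ}
    (ht : t < ((nbrs G ((nbrs G (base G b Δ v₀ j)).getD s (base G b Δ v₀ j))).erase
      (base G b Δ v₀ j)).length) :
    (P2 b Δ (j*(4*Δ)) t = true ↔
      G.dist (((nbrs G ((nbrs G (base G b Δ v₀ j)).getD s (base G b Δ v₀ j))).erase
          (base G b Δ v₀ j)).getD t ((nbrs G (base G b Δ v₀ j)).getD s (base G b Δ v₀ j)))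
        (m (j*(4*Δ)))
      < G.dist ((nbrs G (base G b Δ v₀ j)).getD s (base G b Δ v₀ j)) (m (j*(4*Δ)))) := by
  set u := base G b Δ v₀ j with hu
  set w := (nbrs G u).getD s u with hw
  have hs : s < (nbrs G u).length := by
    have := List.mem_of_find?_eq_some hscan1
    rwa [List.mem_range] at this
  have hwmem : w ∈ nbrs G u := by
    rw [hw, getD_eq_getElem' hs]; exact List.getElem_mem hs
  have humem : u ∈ nbrs G w := (mem_nbrs G).mpr ((mem_nbrs G).mp hwmem).symm
  have hlen2 : ((nbrs G w).erase u).length ≤ Δ - 1 := by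
    rw [List.length_erase_of_mem humem, length_nbrs]
    have := hdeg w
    omega
  have htΔ : t ≤ Δ - 2 := by omega
  have hcx : c (j*(4*Δ)+(2*Δ+2+2*t)) = ((nbrs G w).erase u).getD t w := by
    rw [hc]; exact probe_x G b v₀ hΔ htΔ hscan1
  have hcw1 : c (j*(4*Δ)+(2*Δ+1+2*t)) = w := by
    rw [hc]; exact probe_w G b v₀ hΔ (by omega) hscan1
  have hcw2 : c (j*(4*Δ)+(2*Δ+3+2*t)) = w := by
    rw [hc]
    have := probe_w G b v₀ (t:=t+1) hΔ (by omega) hscan1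
    rwa [show 2*Δ+1+2*(t+1) = 2*Δ+3+2*t from by omega] at this
  have hb1 := bit_eq G hΔ hm hb j (2*Δ+2+2*t) (by omega) (by omega)
  have hb2 := bit_eq G hΔ hm hb j (2*Δ+3+2*t) (by omega) (by omega)
  rw [show j*(4*Δ)+(2*Δ+2+2*t)-1 = j*(4*Δ)+(2*Δ+1+2*t) from by omega] at hb1
  rw [show j*(4*Δ)+(2*Δ+3+2*t)-1 = j*(4*Δ)+(2*Δ+2+2*t) from by omega] at hb2
  rw [hcx, hcw1] at hb1
  rw [hcw2, hcx] at hb2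
  unfold P2
  rw [show j*(4*Δ)+2*Δ+2+2*t = j*(4*Δ)+(2*Δ+2+2*t) from by omega,
    show j*(4*Δ)+2*Δ+3+2*t = j*(4*Δ)+(2*Δ+3+2*t) from by omega,
    Bool.and_eq_true, Bool.not_eq_true']
  constructor
  · rintro ⟨ha, hb'⟩
    have hle := hb1.mp ha
    have hnle : ¬ (G.dist w (m (j*(4*Δ))) ≤
        G.dist (((nbrs G w).erase u).getD t w) (m (j*(4*Δ)))) := by
      intro hx
      rw [hb2.mpr hx] at hb'
      exact absurd hb' (by simp)
    omega
  · intro h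
    refine ⟨hb1.mpr (by omega), ?_⟩
    rcases Bool.eq_false_or_eq_true (b (j*(4*Δ)+(2*Δ+3+2*t))) with htt | hf
    · have := hb2.mp htt; omega
    · exact hf

lemma scan1_spec (hG : G.Connected) (hΔ : 2 ≤ Δ) (hdeg : ∀ v : V, G.degree v ≤ Δ)
    (hm : IsSlowMouseWalk G (4*Δ) m) (hb : b = fun t => gameBit G c m t)
    (hc : ∀ t, c t = probe G b Δ v₀ t) (j : ℕ)
    (hne : m (j*(4*Δ)) ≠ base G b Δ v₀ j) :
    ∃ s, scan1 G b (base G b Δ v₀ j) (j*(4*Δ)) = some s ∧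
      s < (nbrs G (base G b Δ v₀ j)).length ∧
      G.dist ((nbrs G (base G b Δ v₀ j)).getD s (base G b Δ v₀ j)) (m (j*(4*Δ))) + 1
        = G.dist (base G b Δ v₀ j) (m (j*(4*Δ))) := by
  set u := base G b Δ v₀ j with hu
  set v := m (j*(4*Δ)) with hv
  cases hscan : scan1 G b u (j*(4*Δ)) with
  | none =>
    exfalso
    obtain ⟨w, hadj, hwd⟩ := exists_adj_dist hG (Ne.symm hne)
    have hwmem : w ∈ nbrs G u := (mem_nbrs G).mpr hadj
    obtain ⟨s, hs, hws⟩ := List.mem_iff_getElem.mp hwmem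
    have hP1 : P1 b (j*(4*Δ)) s = true := by
      rw [P1_iff G hΔ hdeg hm hb hc j hs, getD_eq_getElem' hs, hws, ← hu, ← hv]
      omega
    have := List.find?_eq_none.mp hscan s (List.mem_range.mpr hs)
    exact this hP1
  | some s =>
    have hs : s < (nbrs G u).length := by
      have := List.mem_of_find?_eq_some hscan
      rwa [List.mem_range] at this
    have hP1 : P1 b (j*(4*Δ)) s = true := List.find?_some hscan
    have hlt := (P1_iff G hΔ hdeg hm hb hc j hs).mp hP1
    rw [← hu, ← hv] at hlt
    refine ⟨s, rfl, hs, ?_⟩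
    have htri : G.dist u v ≤ G.dist u ((nbrs G u).getD s u) + G.dist ((nbrs G u).getD s u) v :=
      hG.dist_triangle
    have hadj : G.Adj u ((nbrs G u).getD s u) := by
      rw [getD_eq_getElem' hs]
      exact (mem_nbrs G).mp (List.getElem_mem hs)
    have h1 : G.dist u ((nbrs G u).getD s u) = 1 := SimpleGraph.dist_eq_one_iff_adj.mpr hadj
    omega

lemma scan2_spec (hG : G.Connected) (hΔ : 2 ≤ Δ) (hdeg : ∀ v : V, G.degree v ≤ Δ)
    (hm : IsSlowMouseWalk G (4*Δ) m) (hb : b = fun t => gameBit G c m t)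
    (hc : ∀ t, c t = probe G b Δ v₀ t) (j : ℕ) {s : ℕ}
    (hscan1 : scan1 G b (base G b Δ v₀ j) (j*(4*Δ)) = some s)
    (hsd : G.dist ((nbrs G (base G b Δ v₀ j)).getD s (base G b Δ v₀ j)) (m (j*(4*Δ))) + 1
        = G.dist (base G b Δ v₀ j) (m (j*(4*Δ))))
    (hne : m (j*(4*Δ)) ≠ (nbrs G (base G b Δ v₀ j)).getD s (base G b Δ v₀ j)) :
    ∃ t, scan2 G b ((nbrs G (base G b Δ v₀ j)).getD s (base G b Δ v₀ j))
        (base G b Δ v₀ j) Δ (j*(4*Δ)) = some t ∧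
      t < ((nbrs G ((nbrs G (base G b Δ v₀ j)).getD s (base G b Δ v₀ j))).erase
          (base G b Δ v₀ j)).length ∧
      G.dist (((nbrs G ((nbrs G (base G b Δ v₀ j)).getD s (base G b Δ v₀ j))).erase
          (base G b Δ v₀ j)).getD t ((nbrs G (base G b Δ v₀ j)).getD s (base G b Δ v₀ j)))
        (m (j*(4*Δ))) + 2 ≤ G.dist (base G b Δ v₀ j) (m (j*(4*Δ))) := by
  set u := base G b Δ v₀ j with hu
  set w := (nbrs G u).getD s u with hw
  set v := m (j*(4*Δ)) with hv
  cases hscan : scan2 G b w u Δ (j*(4*Δ)) with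
  | none =>
    exfalso
    obtain ⟨z, hadj, hzd⟩ := exists_adj_dist hG (Ne.symm hne)
    have hzu : z ≠ u := by
      intro h
      rw [h] at hzd
      omega
    have hzmem : z ∈ (nbrs G w).erase u :=
      (List.mem_erase_of_ne hzu).mpr ((mem_nbrs G).mpr hadj)
    obtain ⟨t, ht, hzt⟩ := List.mem_iff_getElem.mp hzmem
    have hP2 : P2 b Δ (j*(4*Δ)) t = true := by
      rw [P2_iff G hΔ hdeg hm hb hc j hscan1 ht, getD_eq_getElem' ht, hzt, ← hu, ← hw, ← hv]
      omega
    exact (List.find?_eq_none.mp hscan t (List.mem_range.mpr ht)) hP2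
  | some t =>
    have ht : t < ((nbrs G w).erase u).length := by
      have := List.mem_of_find?_eq_some hscan
      rwa [List.mem_range] at this
    have hP2 : P2 b Δ (j*(4*Δ)) t = true := List.find?_some hscan
    have hlt := (P2_iff G hΔ hdeg hm hb hc j hscan1 ht).mp hP2
    rw [← hu, ← hw, ← hv] at hlt
    exact ⟨t, rfl, ht, by omega⟩

lemma mt_const {W : Type*} (hΔ : 2 ≤ Δ) {mt : ℕ → W} {j R : ℕ} (hR : R ≤ 4*Δ - 1)
    (hslow : ∀ j', j' < j*(4*Δ)+R → ¬ (4*Δ) ∣ (j'+1) → mt (j'+1) = mt j') :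
    ∀ r, r ≤ R → mt (j*(4*Δ)+r) = mt (j*(4*Δ)) := by
  intro r
  induction r with
  | zero => intro _; rfl
  | succ r ih =>
    intro hr
    have hT : (4*Δ) ∣ j*(4*Δ) := ⟨j, by ring⟩
    have hnd : ¬ (4*Δ) ∣ (j*(4*Δ) + r + 1) := by
      intro hdvd
      have h2 : (4*Δ) ∣ (r + 1) := (Nat.dvd_add_right hT).mp hdvd
      have := Nat.le_of_dvd (by omega) h2
      omega
    have h1 := hslow (j*(4*Δ)+r) (by omega) hnd
    calc mt (j*(4*Δ)+(r+1)) = mt (j*(4*Δ)+r) := h1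
    _ = mt (j*(4*Δ)) := ih (by omega)

lemma collapseA (hG : G.Connected) (hΔ : 2 ≤ Δ) (hdeg : ∀ v : V, G.degree v ≤ Δ)
    (hm : IsSlowMouseWalk G (4*Δ) m) (hb : b = fun t => gameBit G c m t)
    (hc : ∀ t, c t = probe G b Δ v₀ t) (j : ℕ)
    (hv : m (j*(4*Δ)) = base G b Δ v₀ j) :
    ∀ x ∈ slowMouseSet G (4*Δ) c m (j*(4*Δ) + 2*Δ), x = base G b Δ v₀ j := by
  intro x hx
  obtain ⟨mt, hmti, -, hslow, hbits⟩ := hx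
  have hgb : ∀ tt, gameBit G c m tt = b tt := fun tt => by rw [hb]
  have hmtc : ∀ r, r ≤ 2*Δ → mt (j*(4*Δ)+r) = mt (j*(4*Δ)) :=
    mt_const hΔ (by omega) hslow
  by_contra hne
  have hxy : mt (j*(4*Δ)) = x := by
    rw [← hmti]
    exact (hmtc (2*Δ) le_rfl).symm
  have hneu : base G b Δ v₀ j ≠ mt (j*(4*Δ)) := by
    rw [hxy]; exact fun h => hne h.symm
  obtain ⟨w, hadj, hwd⟩ := exists_adj_dist hG hneu
  have hwmem : w ∈ nbrs G (base G b Δ v₀ j) := (mem_nbrs G).mpr hadj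
  obtain ⟨s, hs, hws⟩ := List.mem_iff_getElem.mp hwmem
  have hlen : (nbrs G (base G b Δ v₀ j)).length ≤ Δ := by rw [length_nbrs]; exact hdeg _
  have hgd : (nbrs G (base G b Δ v₀ j)).getD s (base G b Δ v₀ j) = w := by
    rw [getD_eq_getElem' hs, hws]
  have hc1 : c (j*(4*Δ)+(2*s+1)) = w := by
    rw [hc, probe_odd G b v₀ (by omega) (by omega), hgd]
  have hc0 : c (j*(4*Δ)+2*s) = base G b Δ v₀ j := by
    rw [hc]; exact probe_even G b v₀ (by omega) (by omega) (by omega)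
  -- the actual bit is false
  have hiff := bit_eq G hΔ hm hb j (2*s+1) (by omega) (by omega)
  rw [show j*(4*Δ)+(2*s+1)-1 = j*(4*Δ)+2*s from by omega, hc1, hc0, hv,
    SimpleGraph.dist_self] at hiff
  have hbf : b (j*(4*Δ)+(2*s+1)) = false := by
    rcases Bool.eq_false_or_eq_true (b (j*(4*Δ)+(2*s+1))) with ht | hf
    · exfalso
      have h0 : G.dist w (base G b Δ v₀ j) = 0 := by
        have := hiff.mp ht; omega
      exact hadj.ne' ((hG.dist_eq_zero_iff).mp h0)
    · exact hf
  -- the candidate constraint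
  have hcon := hbits (j*(4*Δ)+(2*s+1)) (by omega) (by omega)
  rw [show j*(4*Δ)+(2*s+1)-1 = j*(4*Δ)+2*s from by omega, hgb, hbf, hc1, hc0,
    hmtc (2*s+1) (by omega), hmtc (2*s) (by omega)] at hcon
  have hle : G.dist w (mt (j*(4*Δ))) ≤ G.dist (base G b Δ v₀ j) (mt (j*(4*Δ))) := by omega
  simp only [Bool.false_eq_true, iff_false] at hcon
  exact hcon hle

lemma collapseB2 (hG : G.Connected) (hΔ : 2 ≤ Δ) (hdeg : ∀ v : V, G.degree v ≤ Δ)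
    (hm : IsSlowMouseWalk G (4*Δ) m) (hb : b = fun t => gameBit G c m t)
    (hc : ∀ t, c t = probe G b Δ v₀ t) (j : ℕ) {s : ℕ}
    (hscan1 : scan1 G b (base G b Δ v₀ j) (j*(4*Δ)) = some s)
    (hv : m (j*(4*Δ)) = (nbrs G (base G b Δ v₀ j)).getD s (base G b Δ v₀ j)) :
    ∀ x ∈ slowMouseSet G (4*Δ) c m (j*(4*Δ) + (4*Δ-1)),
      x = (nbrs G (base G b Δ v₀ j)).getD s (base G b Δ v₀ j) := by
  intro x hx
  obtain ⟨mt, hmti, -, hslow, hbits⟩ := hx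
  have hgb : ∀ tt, gameBit G c m tt = b tt := fun tt => by rw [hb]
  have hmtc : ∀ r, r ≤ 4*Δ-1 → mt (j*(4*Δ)+r) = mt (j*(4*Δ)) :=
    mt_const hΔ (by omega) hslow
  have hs : s < (nbrs G (base G b Δ v₀ j)).length := by
    have := List.mem_of_find?_eq_some hscan1
    rwa [List.mem_range] at this
  have hlen : (nbrs G (base G b Δ v₀ j)).length ≤ Δ := by rw [length_nbrs]; exact hdeg _
  have hwmem : (nbrs G (base G b Δ v₀ j)).getD s (base G b Δ v₀ j)
      ∈ nbrs G (base G b Δ v₀ j) := by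
    rw [getD_eq_getElem' hs]; exact List.getElem_mem hs
  have hadj : G.Adj (base G b Δ v₀ j) ((nbrs G (base G b Δ v₀ j)).getD s (base G b Δ v₀ j)) :=
    (mem_nbrs G).mp hwmem
  have humem : base G b Δ v₀ j
      ∈ nbrs G ((nbrs G (base G b Δ v₀ j)).getD s (base G b Δ v₀ j)) :=
    (mem_nbrs G).mpr hadj.symm
  have hlen2 : ((nbrs G ((nbrs G (base G b Δ v₀ j)).getD s (base G b Δ v₀ j))).erase
      (base G b Δ v₀ j)).length ≤ Δ - 1 := by
    rw [List.length_erase_of_mem humem, length_nbrs]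
    have := hdeg ((nbrs G (base G b Δ v₀ j)).getD s (base G b Δ v₀ j))
    omega
  by_contra hne
  have hxy : mt (j*(4*Δ)) = x := by
    rw [← hmti]
    exact (hmtc (4*Δ-1) le_rfl).symm
  -- phase-1 constraints: dist w y < dist u y
  have hP1 : P1 b (j*(4*Δ)) s = true := List.find?_some hscan1
  unfold P1 at hP1
  rw [Bool.and_eq_true, Bool.not_eq_true'] at hP1
  have hc1 : c (j*(4*Δ)+(2*s+1)) = (nbrs G (base G b Δ v₀ j)).getD s (base G b Δ v₀ j) := by
    rw [hc]; exact probe_odd G b v₀ (by omega) (by omega)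
  have hc0 : c (j*(4*Δ)+2*s) = base G b Δ v₀ j := by
    rw [hc]; exact probe_even G b v₀ (by omega) (by omega) (by omega)
  have hc2 : c (j*(4*Δ)+(2*s+2)) = base G b Δ v₀ j := by
    rw [hc]; exact probe_even G b v₀ (Δ:=Δ) (j:=j) (r:=2*s+2) (by omega) (by omega) (by omega)
  have hcon1 := hbits (j*(4*Δ)+(2*s+1)) (by omega) (by omega)
  rw [show j*(4*Δ)+(2*s+1)-1 = j*(4*Δ)+2*s from by omega, hgb, hc1, hc0,
    hmtc (2*s+1) (by omega), hmtc (2*s) (by omega),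
    show j*(4*Δ)+(2*s+1) = j*(4*Δ)+2*s+1 from by omega, hP1.1] at hcon1
  replace hcon1 := hcon1.mpr rfl
  have hcon2 := hbits (j*(4*Δ)+(2*s+2)) (by omega) (by omega)
  rw [show j*(4*Δ)+(2*s+2)-1 = j*(4*Δ)+(2*s+1) from by omega, hgb, hc2, hc1,
    hmtc (2*s+2) (by omega), hmtc (2*s+1) (by omega),
    show j*(4*Δ)+(2*s+2) = j*(4*Δ)+2*s+2 from by omega, hP1.2] at hcon2
  simp only [Bool.false_eq_true, iff_false] at hcon2
  -- geodesic neighbor z of w towards y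
  have hnwy : (nbrs G (base G b Δ v₀ j)).getD s (base G b Δ v₀ j) ≠ mt (j*(4*Δ)) := by
    rw [hxy]; exact fun h => hne h.symm
  obtain ⟨z, hadjz, hzd⟩ := exists_adj_dist hG hnwy
  have hzu : z ≠ base G b Δ v₀ j := by
    intro h
    rw [h] at hzd
    omega
  have hzmem : z ∈ (nbrs G ((nbrs G (base G b Δ v₀ j)).getD s (base G b Δ v₀ j))).erase
      (base G b Δ v₀ j) :=
    (List.mem_erase_of_ne hzu).mpr ((mem_nbrs G).mpr hadjz)
  obtain ⟨t, ht, hzt⟩ := List.mem_iff_getElem.mp hzmem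
  have hgdz : ((nbrs G ((nbrs G (base G b Δ v₀ j)).getD s (base G b Δ v₀ j))).erase
      (base G b Δ v₀ j)).getD t ((nbrs G (base G b Δ v₀ j)).getD s (base G b Δ v₀ j)) = z := by
    rw [getD_eq_getElem' ht, hzt]
  -- the actual bit at the x-slot is false
  have hcx : c (j*(4*Δ)+(2*Δ+2+2*t)) = z := by
    rw [hc, probe_x G b v₀ hΔ (by omega) hscan1, hgdz]
  have hcw : c (j*(4*Δ)+(2*Δ+1+2*t)) = (nbrs G (base G b Δ v₀ j)).getD s (base G b Δ v₀ j) := by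
    rw [hc]; exact probe_w G b v₀ hΔ (by omega) hscan1
  have hiff := bit_eq G hΔ hm hb j (2*Δ+2+2*t) (by omega) (by omega)
  rw [show j*(4*Δ)+(2*Δ+2+2*t)-1 = j*(4*Δ)+(2*Δ+1+2*t) from by omega, hcx, hcw, hv,
    SimpleGraph.dist_self] at hiff
  have hbf : b (j*(4*Δ)+(2*Δ+2+2*t)) = false := by
    rcases Bool.eq_false_or_eq_true (b (j*(4*Δ)+(2*Δ+2+2*t))) with htt | hf
    · exfalso
      have h0 : G.dist z ((nbrs G (base G b Δ v₀ j)).getD s (base G b Δ v₀ j)) = 0 := by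
        have := hiff.mp htt; omega
      exact hadjz.ne' ((hG.dist_eq_zero_iff).mp h0)
    · exact hf
  -- the candidate constraint at the x-slot
  have hcon3 := hbits (j*(4*Δ)+(2*Δ+2+2*t)) (by omega) (by omega)
  rw [show j*(4*Δ)+(2*Δ+2+2*t)-1 = j*(4*Δ)+(2*Δ+1+2*t) from by omega, hgb, hbf, hcx, hcw,
    hmtc (2*Δ+2+2*t) (by omega), hmtc (2*Δ+1+2*t) (by omega)] at hcon3
  simp only [Bool.false_eq_true, iff_false] at hcon3
  exact hcon3 (by omega)

lemma descent (hG : G.Connected) (hΔ : 2 ≤ Δ) (hdeg : ∀ v : V, G.degree v ≤ Δ)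
    (hm : IsSlowMouseWalk G (4*Δ) m) (hb : b = fun t => gameBit G c m t)
    (hc : ∀ t, c t = probe G b Δ v₀ t) :
    ∀ n j, G.dist (base G b Δ v₀ j) (m (j*(4*Δ))) ≤ n →
      ∃ i u', ∀ x ∈ slowMouseSet G (4*Δ) c m i, G.dist u' x ≤ 0 := by
  intro n
  induction n with
  | zero =>
    intro j hdist
    have hv : m (j*(4*Δ)) = base G b Δ v₀ j :=
      ((hG.dist_eq_zero_iff).mp (Nat.le_zero.mp hdist)).symm
    exact ⟨j*(4*Δ)+2*Δ, base G b Δ v₀ j, fun x hx => by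
      rw [collapseA G hG hΔ hdeg hm hb hc j hv x hx, SimpleGraph.dist_self]⟩
  | succ n ih =>
    intro j hdist
    by_cases h0 : m (j*(4*Δ)) = base G b Δ v₀ j
    · exact ⟨j*(4*Δ)+2*Δ, base G b Δ v₀ j, fun x hx => by
        rw [collapseA G hG hΔ hdeg hm hb hc j h0 x hx, SimpleGraph.dist_self]⟩
    · obtain ⟨s, hscan1, hs, hsd⟩ := scan1_spec G hG hΔ hdeg hm hb hc j h0
      by_cases h1 : m (j*(4*Δ)) = (nbrs G (base G b Δ v₀ j)).getD s (base G b Δ v₀ j)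
      · exact ⟨j*(4*Δ)+(4*Δ-1), (nbrs G (base G b Δ v₀ j)).getD s (base G b Δ v₀ j),
          fun x hx => by
            rw [collapseB2 G hG hΔ hdeg hm hb hc j hscan1 h1 x hx, SimpleGraph.dist_self]⟩
      · obtain ⟨t, hscan2, ht, hsd2⟩ := scan2_spec G hG hΔ hdeg hm hb hc j hscan1 hsd h1
        apply ih (j+1)
        have hnb : base G b Δ v₀ (j+1) =
            ((nbrs G ((nbrs G (base G b Δ v₀ j)).getD s (base G b Δ v₀ j))).erase
              (base G b Δ v₀ j)).getD t
              ((nbrs G (base G b Δ v₀ j)).getD s (base G b Δ v₀ j)) := by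
          show nextBase G b Δ (base G b Δ v₀ j) (j*(4*Δ)) = _
          simp only [nextBase, hscan1, hscan2]
        have hstep : G.dist (m (j*(4*Δ))) (m ((j+1)*(4*Δ))) ≤ 1 := mouse_step G hΔ hm j
        have htri : G.dist (((nbrs G ((nbrs G (base G b Δ v₀ j)).getD s (base G b Δ v₀ j))).erase
              (base G b Δ v₀ j)).getD t ((nbrs G (base G b Δ v₀ j)).getD s (base G b Δ v₀ j)))
              (m ((j+1)*(4*Δ))) ≤
            G.dist (((nbrs G ((nbrs G (base G b Δ v₀ j)).getD s (base G b Δ v₀ j))).erase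
              (base G b Δ v₀ j)).getD t ((nbrs G (base G b Δ v₀ j)).getD s (base G b Δ v₀ j)))
              (m (j*(4*Δ))) + G.dist (m (j*(4*Δ))) (m ((j+1)*(4*Δ))) :=
          hG.dist_triangle
        rw [hnb]
        omega

end Analysis
end CatMouseAux


/-- If `Δ ≥ 2`, then the cat can localize a `4Δ`-slow mouse up to distance `0`
on every finite connected graph of maximum degree at most `Δ`. -/
theorem cat_localizes_slow_mouse {V : Type*} [Fintype V]
    (G : SimpleGraph V) [DecidableRel G.Adj] (hG : G.Connected)
    (Δ : ℕ) (hΔ : 2 ≤ Δ) (hdeg : ∀ v : V, G.degree v ≤ Δ) :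
    CanLocalizeSlow G (4 * Δ) 0 := by
  classical
  obtain ⟨v₀⟩ := hG.nonempty
  refine ⟨CatMouseAux.probe G (fun _ => false) Δ v₀ 0,
    CatMouseAux.probe G (fun _ => false) Δ v₀ 1,
    fun n bits => CatMouseAux.probe G
      (fun s => if h : 1 ≤ s ∧ s - 1 < n then bits ⟨s-1, h.2⟩ else false) Δ v₀ (n+1), ?_⟩
  intro m c hm hc
  set b : ℕ → Bool := fun t => gameBit G c m t with hbdef
  have hcp : ∀ t, c t = CatMouseAux.probe G b Δ v₀ t := by
    intro t
    match t with
    | 0 =>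
      rw [hc.1]
      exact CatMouseAux.probe_congr G hΔ hdeg (fun i h1 h2 => absurd h2 (by omega))
    | 1 =>
      rw [hc.2.1]
      exact CatMouseAux.probe_congr G hΔ hdeg (fun i h1 h2 => absurd h1 (by omega))
    | (i+2) =>
      rw [hc.2.2 i]
      apply CatMouseAux.probe_congr G hΔ hdeg
      intro s hs1 hs2
      simp only []
      rw [dif_pos ⟨hs1, by omega⟩]
      show gameBit G c m ((s-1)+1) = b s
      rw [show s-1+1 = s from by omega]
  exact CatMouseAux.descent G hG hΔ hdeg hm hbdef hcp
    (G.dist (CatMouseAux.base G b Δ v₀ 0) (m (0*(4*Δ)))) 0 le_rfl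
end

section
/- There is a constant C > 0 such that for every integer n ≥ 1, the cat can localize the mouse up to distance 2 within time C·(⌈log₂ n⌉ + 1) on the path P_n of order n, i.e., within time O(log n). -/
open SimpleGraph

/-- The mouse moves along edges of `G`: each position belongs to the closed
neighborhood of the previous one (0-indexed time). -/
def IsMouseWalk {V : Type*} (G : SimpleGraph V) (m : ℕ → V) : Prop :=
  ∀ i : ℕ, m (i + 1) = m i ∨ G.Adj (m i) (m (i + 1))

/-- The set `Mᵢ` of possible mouse positions consistent with the information
available to the cat after (0-indexed) round `i`. -/
def mouseSet {V : Type*} (G : SimpleGraph V) (c m : ℕ → V) (i : ℕ) : Set V :=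
  {u | ∃ mt : ℕ → V, mt i = u ∧
    (∀ j : ℕ, j < i → (mt (j + 1) = mt j ∨ G.Adj (mt j) (mt (j + 1)))) ∧
    ∀ j : ℕ, 1 ≤ j → j ≤ i →
      ((G.dist (c j) (mt j) ≤ G.dist (c (j - 1)) (mt (j - 1))) ↔ gameBit G c m j = true)}

/-- The cat can localize the mouse up to distance `d` within time `t` on `G`:
there is a strategy such that in every game in which the cat follows it, at some
round `i ≤ t` the set `Mᵢ` has radius at most `d`  (i.e. some vertex `u` is within
distance `d` of every vertex of `Mᵢ`). -/
def CanLocalize {V : Type*} (G : SimpleGraph V) (d t : ℕ) : Prop :=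
  ∃ (c₁ c₂ : V) (f : (n : ℕ) → (Fin n → Bool) → V),
    ∀ m c : ℕ → V, IsMouseWalk G m → FollowsStrategy G c m c₁ c₂ f →
      ∃ i : ℕ, i < t ∧ ∃ u : V, ∀ x ∈ mouseSet G c m i, G.dist u x ≤ d

namespace CatLocal

/-! ### Distance on the path graph -/

lemma pathGraph_dist_le (n : ℕ) (k : ℕ) : ∀ u v : Fin n, (v : ℕ) = (u : ℕ) + k →
    (pathGraph n).dist u v ≤ k := by
  induction k with
  | zero => intro u v h; have : u = v := Fin.ext (by omega); simp [this]
  | succ k ih =>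
    intro u v h
    have hu1 : (u : ℕ) + 1 < n := by have := v.isLt; omega
    set u' : Fin n := ⟨(u : ℕ) + 1, hu1⟩ with hu'
    have hadj : (pathGraph n).Adj u u' := by
      rw [pathGraph_adj]; left; rfl
    have h1 : (pathGraph n).dist u u' ≤ 1 := by
      have := SimpleGraph.dist_le (SimpleGraph.Walk.cons hadj SimpleGraph.Walk.nil)
      simpa using this
    have h2 : (pathGraph n).dist u' v ≤ k := ih u' v (by simp [hu']; omega)
    have hconn : (pathGraph n).Connected := by
      have : n = (n - 1) + 1 := by have := v.isLt; omega
      rw [this]; exact pathGraph_connected _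
    calc (pathGraph n).dist u v ≤ (pathGraph n).dist u u' + (pathGraph n).dist u' v :=
          hconn.dist_triangle
      _ ≤ 1 + k := by omega
      _ = k + 1 := by omega

lemma pathGraph_walk_ge (n : ℕ) {u v : Fin n} (w : (pathGraph n).Walk u v) :
    ((u : ℤ) - (v : ℤ)).natAbs ≤ w.length := by
  induction w with
  | nil => simp
  | @cons a b c h w ih =>
    rw [pathGraph_adj] at h
    have : ((a : ℤ) - (b : ℤ)).natAbs = 1 := by omega
    simp only [SimpleGraph.Walk.length_cons]
    omega

lemma pathGraph_dist_eq (n : ℕ) (u v : Fin n) :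
    ((pathGraph n).dist u v : ℤ) = |(u : ℤ) - (v : ℤ)| := by
  have hconn : (pathGraph n).Connected := by
    have : n = (n - 1) + 1 := by have := v.isLt; omega
    rw [this]; exact pathGraph_connected _
  obtain ⟨w, hw⟩ := (hconn.preconnected u v).exists_walk_length_eq_dist
  have hge : ((u : ℤ) - (v : ℤ)).natAbs ≤ (pathGraph n).dist u v := hw ▸ pathGraph_walk_ge n w
  have hle : (pathGraph n).dist u v ≤ ((u : ℤ) - (v : ℤ)).natAbs := by
    rcases le_total (u : ℕ) (v : ℕ) with h | h
    · have := pathGraph_dist_le n (v - u) u v (by omega)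
      omega
    · have := pathGraph_dist_le n (u - v) v u (by omega)
      rw [SimpleGraph.dist_comm]
      omega
  rw [Int.abs_eq_natAbs]; omega

/-! ### The cat's binary-search state machine -/

/-- The probe that the cat uses next, given the current knowledge state `(l, r, p)`
(`p` is the previous probe).  `lft = true` means the next probe is on the left. -/
def probeOf (N : ℤ) (lft : Bool) (s : ℤ × ℤ × ℤ) : ℤ :=
  if lft then max (s.1 - 1) 0 else min (s.2.1 + 1) (N - 1)

/-- One step of the knowledge-state machine. -/
def mstep (N : ℤ) (lft b : Bool) (s : ℤ × ℤ × ℤ) : ℤ × ℤ × ℤ :=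
  match lft, b with
  | true, true =>
      (max (s.1 - 1) 0,
        min (min (s.2.1 + 1) (N - 1)) ((s.2.2 + max (s.1 - 1) 0 + 1) / 2),
        max (s.1 - 1) 0)
  | true, false =>
      (max (max (s.1 - 1) 0) ((s.2.2 + max (s.1 - 1) 0 + 1) / 2),
        min (s.2.1 + 1) (N - 1),
        max (s.1 - 1) 0)
  | false, true =>
      (max (max (s.1 - 1) 0) ((min (s.2.1 + 1) (N - 1) + s.2.2) / 2),
        min (s.2.1 + 1) (N - 1),
        min (s.2.1 + 1) (N - 1))
  | false, false =>
      (max (s.1 - 1) 0,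
        min (min (s.2.1 + 1) (N - 1)) ((min (s.2.1 + 1) (N - 1) + s.2.2) / 2),
        min (s.2.1 + 1) (N - 1))

lemma mstep_p (N : ℤ) (lft b : Bool) (s : ℤ × ℤ × ℤ) :
    (mstep N lft b s).2.2 = probeOf N lft s := by
  cases lft <;> cases b <;> rfl

/-- The knowledge state after `k` machine steps, driven by the bit stream `β`
(the bit consumed in step `k+1` is `β (k+1)`). -/
def machine (N : ℤ) (β : ℕ → Bool) : ℕ → ℤ × ℤ × ℤ
  | 0 => (0, N - 1, 0)
  | k + 1 => mstep N (decide (k % 2 = 1)) (β (k + 1)) (machine N β k)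

lemma machine_congr (N : ℤ) (β₁ β₂ : ℕ → Bool) :
    ∀ k, (∀ j, 1 ≤ j → j ≤ k → β₁ j = β₂ j) → machine N β₁ k = machine N β₂ k := by
  intro k
  induction k with
  | zero => intro _; rfl
  | succ k ih =>
    intro h
    simp only [machine, ih (fun j h1 h2 => h j h1 (by omega)), h (k+1) (by omega) le_rfl]

/-- Basic invariants of the machine: all components stay in `[0, N-1]`, and the
previous probe is on the correct (alternating) side of the interval. -/
lemma machine_inv (N : ℤ) (hN : 1 ≤ N) (β : ℕ → Bool) (k : ℕ) :
    0 ≤ (machine N β k).1 ∧ (machine N β k).1 ≤ N - 1 ∧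
    0 ≤ (machine N β k).2.1 ∧ (machine N β k).2.1 ≤ N - 1 ∧
    0 ≤ (machine N β k).2.2 ∧ (machine N β k).2.2 ≤ N - 1 ∧
    (k % 2 = 0 → (machine N β k).2.2 ≤ (machine N β k).1) ∧
    (k % 2 = 1 → (machine N β k).2.1 ≤ (machine N β k).2.2) := by
  induction k with
  | zero => simp [machine]; omega
  | succ k ih =>
    rcases Nat.even_or_odd k with hk | hk
    · have hk2 : k % 2 = 0 := Nat.even_iff.mp hk
      have hd : (decide (k % 2 = 1)) = false := by simp [hk2]
      cases hb : β (k + 1) <;> simp only [machine, hd, hb, mstep] <;> omega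
    · have hk2 : k % 2 = 1 := Nat.odd_iff.mp hk
      have hd : (decide (k % 2 = 1)) = true := by simp [hk2]
      cases hb : β (k + 1) <;> simp only [machine, hd, hb, mstep] <;> omega

/-- Two steps (right probe then left probe) starting at an even time halve
the potential `Φ = max (r-l) (r-p-2)` up to an additive constant `2`. -/
lemma two_step_phi (N : ℤ) (hN : 1 ≤ N) (s : ℤ × ℤ × ℤ) (b1 b2 : Bool)
    (h1 : 0 ≤ s.1) (h2 : s.1 ≤ N - 1) (h3 : 0 ≤ s.2.1) (h4 : s.2.1 ≤ N - 1)
    (h5 : 0 ≤ s.2.2) (h6 : s.2.2 ≤ N - 1)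
    (hside : s.2.2 ≤ s.1) (hne : s.1 ≤ s.2.1)
    (hne1 : (mstep N false b1 s).1 ≤ (mstep N false b1 s).2.1) :
    max ((mstep N true b2 (mstep N false b1 s)).2.1 -
          (mstep N true b2 (mstep N false b1 s)).1)
        ((mstep N true b2 (mstep N false b1 s)).2.1 -
          (mstep N true b2 (mstep N false b1 s)).2.2 - 2)
      ≤ (max (s.2.1 - s.1) (s.2.1 - s.2.2 - 2)) / 2 + 2 := by
  obtain ⟨l, r, p⟩ := s
  cases b1 <;> cases b2 <;> simp only [mstep] at * <;> omega

end CatLocal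

namespace CatLocal

/-- The interval length, plus staleness correction, shrinks geometrically along
even times of the machine run. -/
lemma phi_conv (n : ℕ) (hn : 1 ≤ n) (β : ℕ → Bool)
    (hne : ∀ k, (machine (n : ℤ) β k).1 ≤ (machine (n : ℤ) β k).2.1) (J : ℕ) :
    max ((machine (n : ℤ) β (2*J)).2.1 - (machine (n : ℤ) β (2*J)).1)
        ((machine (n : ℤ) β (2*J)).2.1 - (machine (n : ℤ) β (2*J)).2.2 - 2)
      ≤ (((n - 1) / 2^J : ℕ) : ℤ) + 4 := by
  have hN : (1 : ℤ) ≤ (n : ℤ) := by exact_mod_cast hn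
  induction J with
  | zero =>
    simp only [machine, Nat.mul_zero, pow_zero, Nat.div_one]
    omega
  | succ J ih =>
    have h2 : 2 * (J + 1) = (2 * J + 1) + 1 := by omega
    have hd1 : (decide ((2 * J) % 2 = 1)) = false := by
      simp [Nat.mul_mod_right]
    have hd2 : (decide ((2 * J + 1) % 2 = 1)) = true := by
      have h : (2 * J + 1) % 2 = 1 := by omega
      simp [h]
    have inv := machine_inv (n : ℤ) hN β (2 * J)
    have hside : (machine (n : ℤ) β (2*J)).2.2 ≤ (machine (n : ℤ) β (2*J)).1 :=
      inv.2.2.2.2.2.2.1 (by omega)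
    have e1 : machine (n : ℤ) β (2*J+1) = mstep (n : ℤ) false (β (2*J+1))
        (machine (n : ℤ) β (2*J)) := by
      simp only [machine, hd1]
    have hkey := two_step_phi (n : ℤ) hN (machine (n : ℤ) β (2*J)) (β (2*J+1)) (β (2*J+1+1))
      inv.1 inv.2.1 inv.2.2.1 inv.2.2.2.1 inv.2.2.2.2.1 inv.2.2.2.2.2.1 hside (hne (2*J))
      (by rw [← e1]; exact hne (2*J+1))
    rw [h2]
    simp only [machine, hd1, hd2]
    have hdiv : ((n - 1) / 2^J) / 2 = (n - 1) / 2^(J+1) := by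
      rw [Nat.div_div_eq_div_mul, pow_succ]
    omega

/-- Conversion of integers in `[0, n)` to vertices of the path. -/
def toV (n : ℕ) (hn : 0 < n) (z : ℤ) : Fin n := ⟨z.toNat % n, Nat.mod_lt _ hn⟩

lemma toV_val (n : ℕ) (hn : 0 < n) (z : ℤ) (h1 : 0 ≤ z) (h2 : z < n) :
    ((toV n hn z : Fin n) : ℤ) = z := by
  have h : z.toNat % n = z.toNat := Nat.mod_eq_of_lt (by omega)
  simp only [toV, h]
  omega

lemma probeOf_range (N : ℤ) (hN : 1 ≤ N) (lft : Bool) (s : ℤ × ℤ × ℤ)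
    (h2 : s.1 ≤ N - 1) (h3 : 0 ≤ s.2.1) :
    0 ≤ probeOf N lft s ∧ probeOf N lft s ≤ N - 1 := by
  cases lft <;> simp only [probeOf] <;> omega

/-- Main invariant: every mouse trajectory consistent with the observed bits lies,
at time `k+1`, inside the machine's interval `[l_k, r_k]`. -/
lemma containment (n : ℕ) (hn : 0 < n) (dl : ℕ → Bool) (c : ℕ → Fin n)
    (hcp : ∀ k : ℕ, ((c (k+1)) : ℤ) = (machine (n : ℤ) (fun j => dl (j+1)) k).2.2) :
    ∀ (k : ℕ) (mt : ℕ → Fin n),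
      (∀ j, j < k + 1 → mt (j+1) = mt j ∨ (pathGraph n).Adj (mt j) (mt (j+1))) →
      (∀ j, 1 ≤ j → j ≤ k + 1 →
        ((pathGraph n).dist (c j) (mt j) ≤ (pathGraph n).dist (c (j-1)) (mt (j-1)) ↔
          dl j = true)) →
      (machine (n : ℤ) (fun j => dl (j+1)) k).1 ≤ ((mt (k+1)) : ℤ) ∧
        ((mt (k+1)) : ℤ) ≤ (machine (n : ℤ) (fun j => dl (j+1)) k).2.1 := by
  have hN : (1 : ℤ) ≤ (n : ℤ) := by exact_mod_cast hn
  intro k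
  induction k with
  | zero =>
    intro mt _ _
    have h1 := (mt 1).isLt
    simp only [machine]
    omega
  | succ k ih =>
    intro mt hwalk hbits
    have IH := ih mt (fun j hj => hwalk j (by omega)) (fun j h1 h2 => hbits j h1 (by omega))
    set B : ℕ → Bool := fun j => dl (j+1) with hB
    set s := machine (n : ℤ) B k with hs
    have inv := machine_inv (n : ℤ) hN B k
    rw [← hs] at inv
    have hmv : ((mt (k+1+1)) : ℤ) ≤ ((mt (k+1)) : ℤ) + 1 ∧
        ((mt (k+1)) : ℤ) - 1 ≤ ((mt (k+1+1)) : ℤ) := by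
      rcases hwalk (k+1) (by omega) with h | h
      · rw [h]; omega
      · rw [pathGraph_adj] at h
        have h1 := (mt (k+1)).isLt
        have h2 := (mt (k+1+1)).isLt
        omega
    have hx2a : (0 : ℤ) ≤ ((mt (k+1+1)) : ℤ) := by omega
    have hx2b : ((mt (k+1+1)) : ℤ) ≤ (n : ℤ) - 1 := by
      have := (mt (k+1+1)).isLt; omega
    have hp : ((c (k+1)) : ℤ) = s.2.2 := hcp k
    have hq : ((c (k+1+1)) : ℤ) = probeOf (n : ℤ) (decide (k % 2 = 1)) s := by
      rw [hcp (k+1)]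
      show (mstep (n : ℤ) (decide (k % 2 = 1)) (B (k+1)) s).2.2 = _
      exact mstep_p _ _ _ _
    have hbit := hbits (k+1+1) (by omega) (by omega)
    have hsub : (k + 1 + 1) - 1 = k + 1 := rfl
    rw [hsub] at hbit
    have hd2 := pathGraph_dist_eq n (c (k+1+1)) (mt (k+1+1))
    have hd1 := pathGraph_dist_eq n (c (k+1)) (mt (k+1))
    have hbitZ : (|((c (k+1+1)) : ℤ) - ((mt (k+1+1)) : ℤ)| ≤
        |((c (k+1)) : ℤ) - ((mt (k+1)) : ℤ)|) ↔ dl (k+1+1) = true := by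
      rw [← hd2, ← hd1, Nat.cast_le]
      exact hbit
    have hgoal : machine (n : ℤ) B (k+1) = mstep (n : ℤ) (decide (k % 2 = 1)) (B (k+1)) s := rfl
    have hδb : B (k+1) = dl (k+1+1) := rfl
    rcases Nat.even_or_odd k with hk | hk
    · -- k even: previous probe on the left, new probe on the right
      have hk2 : k % 2 = 0 := Nat.even_iff.mp hk
      have hdE : (decide (k % 2 = 1)) = false := by simp [hk2]
      have hside : s.2.2 ≤ s.1 := inv.2.2.2.2.2.2.1 hk2
      rw [hdE] at hq hgoal
      have hq' : ((c (k+1+1)) : ℤ) = min (s.2.1 + 1) ((n : ℤ) - 1) := by rw [hq]; rfl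
      have e1 : |((c (k+1)) : ℤ) - ((mt (k+1)) : ℤ)| =
          ((mt (k+1)) : ℤ) - ((c (k+1)) : ℤ) := by
        rw [abs_sub_comm, abs_of_nonneg (by omega)]
      have e2 : |((c (k+1+1)) : ℤ) - ((mt (k+1+1)) : ℤ)| =
          ((c (k+1+1)) : ℤ) - ((mt (k+1+1)) : ℤ) := by
        rw [abs_of_nonneg (by omega)]
      rw [e1, e2, hp, hq'] at hbitZ
      rw [hgoal]
      cases hδ : dl (k+1+1)
      · rw [hδ] at hbitZ
        simp only [Bool.false_eq_true, iff_false, not_le] at hbitZ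
        rw [hδb, hδ]
        simp only [mstep]
        omega
      · rw [hδ] at hbitZ
        have hcond := hbitZ.mpr rfl
        rw [hδb, hδ]
        simp only [mstep]
        omega
    · -- k odd: previous probe on the right, new probe on the left
      have hk2 : k % 2 = 1 := Nat.odd_iff.mp hk
      have hdE : (decide (k % 2 = 1)) = true := by simp [hk2]
      have hside : s.2.1 ≤ s.2.2 := inv.2.2.2.2.2.2.2 hk2
      rw [hdE] at hq hgoal
      have hq' : ((c (k+1+1)) : ℤ) = max (s.1 - 1) 0 := by rw [hq]; rfl
      have e1 : |((c (k+1)) : ℤ) - ((mt (k+1)) : ℤ)| =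
          ((c (k+1)) : ℤ) - ((mt (k+1)) : ℤ) := by
        rw [abs_of_nonneg (by omega)]
      have e2 : |((c (k+1+1)) : ℤ) - ((mt (k+1+1)) : ℤ)| =
          ((mt (k+1+1)) : ℤ) - ((c (k+1+1)) : ℤ) := by
        rw [abs_sub_comm, abs_of_nonneg (by omega)]
      rw [e1, e2, hp, hq'] at hbitZ
      rw [hgoal]
      cases hδ : dl (k+1+1)
      · rw [hδ] at hbitZ
        simp only [Bool.false_eq_true, iff_false, not_le] at hbitZ
        rw [hδb, hδ]
        simp only [mstep]
        omega
      · rw [hδ] at hbitZ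
        have hcond := hbitZ.mpr rfl
        rw [hδb, hδ]
        simp only [mstep]
        omega

end CatLocal


open CatLocal

/-- There is a constant `C > 0` such that for every `n ≥ 1` the cat can localize
the mouse up to distance `2` within time `C(⌈log₂ n⌉ + 1)` on the path `Pₙ`. -/
theorem cat_localizes_mouse_on_path :
    ∃ C : ℕ, 0 < C ∧ ∀ n : ℕ, 1 ≤ n →
      CanLocalize (SimpleGraph.pathGraph n) 2 (C * (Nat.clog 2 n + 1)) := by
  refine ⟨3, by norm_num, ?_⟩
  intro n hn
  have hn0 : 0 < n := hn
  have hN : (1:ℤ) ≤ (n:ℤ) := by exact_mod_cast hn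
  refine ⟨toV n hn0 0, toV n hn0 0,
    (fun k bs => toV n hn0 (probeOf (n:ℤ) (decide (k % 2 = 0))
      (machine (n:ℤ) (fun j => if h : j < k then bs ⟨j, h⟩ else false) (k - 1)))), ?_⟩
  intro m c hwalk hf
  set B : ℕ → Bool := fun j => gameBit (SimpleGraph.pathGraph n) c m (j+1) with hB
  -- the cat's probes agree with the machine's probes
  have hcp : ∀ k : ℕ, ((c (k+1)) : ℤ) = (machine (n:ℤ) B k).2.2 := by
    intro k
    cases k with
    | zero =>
      rw [hf.2.1]
      show ((toV n hn0 0 : Fin n) : ℤ) = 0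
      exact toV_val n hn0 0 le_rfl (by exact_mod_cast hn0)
    | succ k =>
      have hck := hf.2.2 k
      beta_reduce at hck
      rw [hck]
      have hpar : (decide ((k + 1) % 2 = 0)) = (decide (k % 2 = 1)) :=
        decide_eq_decide.mpr (by omega)
      have inv := machine_inv (n:ℤ) hN B k
      have hrange := probeOf_range (n:ℤ) hN (decide (k % 2 = 1))
        (machine (n:ℤ) B k) inv.2.1 inv.2.2.1
      have hext : machine (n:ℤ)
          (fun j => if h : j < k + 1 then
            gameBit (SimpleGraph.pathGraph n) c m ((⟨j, h⟩ : Fin (k+1)).val + 1)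
            else false) ((k + 1) - 1)
          = machine (n:ℤ) B k := by
        apply machine_congr
        intro j h1 h2
        have hj : j < k + 1 := by omega
        simp only [hB, dif_pos hj]
      rw [hext, hpar]
      rw [toV_val n hn0 _ hrange.1 (by omega)]
      exact (mstep_p (n:ℤ) (decide (k % 2 = 1)) (B (k+1)) (machine (n:ℤ) B k)).symm
  -- the real mouse is consistent, hence the machine interval is never empty
  have hbitsm : ∀ j, 1 ≤ j → (((SimpleGraph.pathGraph n).dist (c j) (m j) ≤
      (SimpleGraph.pathGraph n).dist (c (j-1)) (m (j-1))) ↔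
        gameBit (SimpleGraph.pathGraph n) c m j = true) := by
    intro j _
    exact (decide_eq_true_iff).symm
  have hne : ∀ k, (machine (n:ℤ) B k).1 ≤ (machine (n:ℤ) B k).2.1 := by
    intro k
    have hcc := containment n hn0 (fun j => gameBit (SimpleGraph.pathGraph n) c m j) c hcp k m
      (fun j _ => hwalk j) (fun j h1 _ => hbitsm j h1)
    rw [show (fun j => (fun j' => gameBit (SimpleGraph.pathGraph n) c m j') (j+1)) = B
      from rfl] at hcc
    omega
  -- the interval is short at time 2 * clog 2 n
  set J := Nat.clog 2 n with hJ
  have hphi := phi_conv n hn B hne J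
  have hsmall : (n - 1) / 2^J = 0 := by
    apply Nat.div_eq_of_lt
    calc n - 1 < n := by omega
      _ ≤ 2 ^ J := Nat.le_pow_clog (by norm_num) n
  rw [hsmall] at hphi
  set s := machine (n:ℤ) B (2*J) with hs
  have inv := machine_inv (n:ℤ) hN B (2*J)
  rw [← hs] at inv
  have hlen : s.2.1 - s.1 ≤ 4 := by
    have : s.2.1 - s.1 ≤ max (s.2.1 - s.1) (s.2.1 - s.2.2 - 2) := le_max_left _ _
    omega
  -- conclusion
  refine ⟨2 * J + 1, by omega, toV n hn0 (min (s.1 + 2) ((n:ℤ) - 1)), ?_⟩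
  rintro x ⟨mt, hmt, hw2, hb2⟩
  have hcont := containment n hn0 (fun j => gameBit (SimpleGraph.pathGraph n) c m j) c hcp
    (2*J) mt (fun j hj => hw2 j hj) (fun j h1 h2 => hb2 j h1 h2)
  rw [show (fun j => (fun j' => gameBit (SimpleGraph.pathGraph n) c m j') (j+1)) = B
    from rfl] at hcont
  rw [hmt] at hcont
  rw [← hs] at hcont
  have hu := toV_val n hn0 (min (s.1 + 2) ((n:ℤ) - 1)) (by omega) (by omega)
  have hx := x.isLt
  have habs : |((toV n hn0 (min (s.1 + 2) ((n:ℤ) - 1)) : Fin n) : ℤ) - ((x : Fin n) : ℤ)| ≤ 2 := by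
    rw [hu]
    rw [abs_le]
    omega
  have hd := pathGraph_dist_eq n (toV n hn0 (min (s.1 + 2) ((n:ℤ) - 1))) x
  have : (((SimpleGraph.pathGraph n).dist (toV n hn0 (min (s.1 + 2) ((n:ℤ) - 1))) x : ℕ) : ℤ)
      ≤ 2 := by rw [hd]; exact habs
  exact_mod_cast this
end

section
/- Let T be a finite tree, let u and w be two distinct vertices of T having a common neighbor v, and let m and m′ be vertices of T with m′ ∈ N_T[m]. If dist_T(w, m′) ≤ dist_T(u, m), then m′ belongs to the connected component of T − uv that contains v. -/
open SimpleGraph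

private lemma tree_dist_eq_length {V : Type*} {T : SimpleGraph V} (hT : T.IsTree) {a b : V}
    (p : T.Walk a b) (hp : p.IsPath) : T.dist a b = p.length := by
  classical
  refine le_antisymm (SimpleGraph.dist_le p) ?_
  obtain ⟨q, hq⟩ := hT.isConnected.exists_walk_length_eq_dist a b
  have huniq : (⟨p, hp⟩ : T.Path a b) = ⟨q.bypass, q.bypass_isPath⟩ :=
    hT.IsAcyclic.path_unique _ _
  have hpq : p = q.bypass := congrArg Subtype.val huniq
  rw [hpq, ← hq]
  exact q.length_bypass_le

/-- Let `u` and `w` be distinct vertices of a finite tree `T` with a common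
neighbor `v`, and let `m' ∈ N[m]`. If `dist(w, m') ≤ dist(u, m)`, then `m'` lies
in the component of `T − uv` containing `v`. -/
theorem key_observation_le {V : Type*} [Fintype V]
    (T : SimpleGraph V) (hT : T.IsTree) (u w v m m' : V) (huw : u ≠ w)
    (huv : T.Adj u v) (hwv : T.Adj w v)
    (hm' : m' = m ∨ T.Adj m m')
    (hdist : T.dist w m' ≤ T.dist u m) :
    (T.deleteEdges {s(u, v)}).Reachable v m' := by
  classical
  have hconn := hT.isConnected
  obtain ⟨p0⟩ := hconn v m'
  have hp : p0.bypass.IsPath := p0.bypass_isPath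
  set p := p0.bypass with hpdef
  clear_value p
  by_cases he : s(u, v) ∈ p.edges
  · -- the unique path from v to m' uses the edge uv; derive a contradiction
    exfalso
    cases p with
    | nil => simp at he
    | @cons _ x _ h1 p' =>
      -- first show the second vertex is u
      have hx : x = u := by
        by_contra hxu
        have h2 : s(u, v) ∈ p'.edges := by
          rw [Walk.edges_cons] at he
          rcases List.mem_cons.mp he with h | h
          · exfalso
            rcases Sym2.eq_iff.mp h with ⟨hu1, _⟩ | ⟨hu1, _⟩
            · exact huv.ne hu1
            · exact hxu hu1.symm
          · exact h
        have hv : v ∈ p'.support := p'.snd_mem_support_of_mem_edges h2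
        exact ((Walk.cons_isPath_iff _ _).mp hp).2 hv
      have hx' : u = x := hx.symm
      subst hx'
      have hp' : p'.IsPath := hp.of_cons
      have hvp' : v ∉ p'.support := ((Walk.cons_isPath_iff _ _).mp hp).2
      -- distances
      have dum' : T.dist u m' = p'.length := tree_dist_eq_length hT p' hp'
      have dvm' : T.dist v m' = p'.length + 1 := by
        have := tree_dist_eq_length hT (Walk.cons h1 p') hp
        simpa [Nat.add_comm] using this
      have hub : T.dist u m ≤ T.dist u m' + 1 := by
        rcases hm' with rfl | hadj
        · omega
        · have h3 := hconn.dist_triangle (u := u) (v := m') (w := m)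
          have h4 : T.dist m' m = 1 := by
            rw [SimpleGraph.dist_eq_one_iff_adj]; exact hadj.symm
          omega
      have hwle : T.dist w m' ≤ p'.length + 1 := by omega
      -- the unique path from w to m'
      obtain ⟨q0⟩ := hconn w m'
      have hq : q0.bypass.IsPath := q0.bypass_isPath
      set q := q0.bypass with hqdef
      clear_value q
      have dwm' : T.dist w m' = q.length := tree_dist_eq_length hT q hq
      by_cases hvq : v ∈ q.support
      · -- then q passes through v, so it is too long
        have hsplit := congrArg Walk.length (q.take_spec hvq)
        rw [Walk.length_append] at hsplit
        have h5 : 1 ≤ (q.takeUntil v hvq).length := by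
          rcases Nat.eq_zero_or_pos (q.takeUntil v hvq).length with h0 | h0
          · exact absurd (Walk.eq_of_length_eq_zero h0) hwv.ne
          · exact h0
        have h6 : T.dist v m' ≤ (q.dropUntil v hvq).length :=
          SimpleGraph.dist_le _
        omega
      · -- then cons (v~w) q is a second path from v to m', contradicting uniqueness
        have hcq : (Walk.cons hwv.symm q).IsPath :=
          (Walk.cons_isPath_iff _ _).mpr ⟨hq, hvq⟩
        have huniq : (⟨Walk.cons hwv.symm q, hcq⟩ : T.Path v m')
            = ⟨Walk.cons h1 p', hp⟩ := hT.IsAcyclic.path_unique _ _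
        have hweq : Walk.cons hwv.symm q = Walk.cons h1 p' := congrArg Subtype.val huniq
        have hsup := congrArg Walk.support hweq
        rw [Walk.support_cons, Walk.support_cons, q.support_eq_cons,
          p'.support_eq_cons] at hsup
        have : w = u := by
          have := List.tail_eq_of_cons_eq hsup
          exact (List.head_eq_of_cons_eq this)
        exact huw this.symm
  · -- the path avoids the edge uv, so it lives in the deleted graph
    exact ⟨p.toDeleteEdges {s(u, v)} fun e hmem hset =>
      he ((Set.mem_singleton_iff.mp hset) ▸ hmem)⟩
end

section
/- Let T be a finite tree, let u and w be two distinct vertices of T having a common neighbor v, and let m and m′ be vertices of T with m′ ∈ N_T[m]. If dist_T(w, m′) > dist_T(u, m), then m′ belongs to the connected component of T − wv that contains v. -/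
open SimpleGraph

/-- Let `u` and `w` be distinct vertices of a finite tree `T` with a common
neighbor `v`, and let `m' ∈ N[m]`. If `dist(w, m') > dist(u, m)`, then `m'` lies
in the component of `T − wv` containing `v`. -/
theorem key_observation_gt {V : Type*} [Fintype V]
    (T : SimpleGraph V) (hT : T.IsTree) (u w v m m' : V) (huw : u ≠ w)
    (huv : T.Adj u v) (hwv : T.Adj w v)
    (hm' : m' = m ∨ T.Adj m m')
    (hdist : T.dist w m' > T.dist u m) :
    (T.deleteEdges {s(w, v)}).Reachable v m' := by
  classical
  by_contra h
  have hconn : T.Connected := hT.isConnected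
  -- dist m m' ≤ 1
  have hmm' : T.dist m m' ≤ 1 := by
    rcases hm' with rfl | hadj
    · rw [SimpleGraph.dist_self]; omega
    · exact le_of_eq (SimpleGraph.dist_eq_one_iff_adj.mpr hadj)
  have hum' : T.dist u m' ≤ T.dist u m + 1 :=
    le_trans (hconn.dist_triangle (v := m)) (by omega)
  -- u is reachable to v in the deleted graph
  have hedge : s(u, v) ≠ s(w, v) := by
    simp only [ne_eq, Sym2.eq, Sym2.rel_iff', Prod.mk.injEq, Prod.swap_prod_mk]
    push_neg
    exact ⟨fun h1 => huw h1, fun h1 _ => huv.ne h1⟩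
  have huvG : (T.deleteEdges {s(w, v)}).Adj u v := by
    rw [SimpleGraph.deleteEdges_adj]
    exact ⟨huv, by simpa using hedge⟩
  -- shortest walk from u to m'
  obtain ⟨p, hp⟩ : ∃ p : T.Walk u m', p.length = T.dist u m' :=
    (hconn u m').exists_walk_length_eq_dist
  have hw : w ∈ p.support := by
    by_contra hwns
    have hpe : ∀ e ∈ p.edges, e ∉ ({s(w, v)} : Set (Sym2 V)) := by
      intro e he hes
      rw [Set.mem_singleton_iff] at hes
      subst hes
      exact hwns (p.fst_mem_support_of_mem_edges he)
    exact h ((huvG.symm.reachable.trans ⟨p.toDeleteEdges _ hpe⟩))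
  -- split p at w
  have hsplit := congr_arg SimpleGraph.Walk.length (p.take_spec hw)
  rw [SimpleGraph.Walk.length_append] at hsplit
  have h1 : T.dist u w ≤ (p.takeUntil w hw).length := SimpleGraph.dist_le _
  have h2 : T.dist w m' ≤ (p.dropUntil w hw).length := SimpleGraph.dist_le _
  have h3 : 0 < T.dist u w := hconn.pos_dist_of_ne huw
  omega
end

section
/- Let x, y ∈ ℤ, let ∂x be a positive even integer and ∂y a positive odd integer, and set p_x = ∂x/2 − 1 and p_y = (∂y − 1)/2. Define c₁ = (x + p_x, y + p_y), c₂ = (x + p_x + 2, y + p_y), and c₃ = (x + p_x + 2, y + p_y + 2). Let m₁, m₂, m₃, m₄ ∈ ℤ² satisfy m₁ ∈ [x, x + ∂x] × [y, y + ∂y] and ‖m_{j+1} − m_j‖₁ ≤ 1 for j = 1, 2, 3. If ‖c₂ − m₃‖₁ ≤ ‖c₁ − m₂‖₁ and ‖c₃ − m₄‖₁ > ‖c₂ − m₃‖₁, then m₄ ∈ [x + ∂x/2 − 1, x + ∂x + 3] × [y − 3, y + (∂y + 1)/2]. In particular, m₄ lies in an axis-parallel box of width at most ⌈∂x/2⌉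 + 4 and height at most ⌈∂y/2⌉ + 3. -/
/-- The ℓ1-distance of two points of `ℤ²`. -/
def l1dist (p q : ℤ × ℤ) : ℤ := |p.1 - q.1| + |p.2 - q.2|

set_option maxHeartbeats 2000000 in
/-- Grid-shrinking step: with `∂x` positive and even, `∂y` positive and odd,
`p_x = ∂x/2 − 1`, `p_y = (∂y − 1)/2`, and the three probes
`c₁ = (x + p_x, y + p_y)`, `c₂ = (x + p_x + 2, y + p_y)`,
`c₃ = (x + p_x + 2, y + p_y + 2)`, if the mouse positions `m₁, m₂, m₃, m₄`
form a unit-speed walk starting in `[x, x + ∂x] × [y, y + ∂y]` and the answers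
are `‖c₂ − m₃‖₁ ≤ ‖c₁ − m₂‖₁` and `‖c₃ − m₄‖₁ > ‖c₂ − m₃‖₁`, then
`m₄ ∈ [x + ∂x/2 − 1, x + ∂x + 3] × [y − 3, y + (∂y + 1)/2]`; in particular `m₄`
lies in a box of width at most `⌈∂x/2⌉ + 4` and height at most `⌈∂y/2⌉ + 3`. -/
theorem grid_shrinking_step (x y dx dy : ℤ)
    (hdx : 0 < dx) (hdxe : Even dx) (hdy : 0 < dy) (hdyo : Odd dy)
    (px py : ℤ) (hpx : px = dx / 2 - 1) (hpy : py = (dy - 1) / 2)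
    (c₁ c₂ c₃ : ℤ × ℤ)
    (hc₁ : c₁ = (x + px, y + py)) (hc₂ : c₂ = (x + px + 2, y + py))
    (hc₃ : c₃ = (x + px + 2, y + py + 2))
    (m₁ m₂ m₃ m₄ : ℤ × ℤ)
    (hm₁ : m₁.1 ∈ Set.Icc x (x + dx) ∧ m₁.2 ∈ Set.Icc y (y + dy))
    (h12 : l1dist m₂ m₁ ≤ 1) (h23 : l1dist m₃ m₂ ≤ 1) (h34 : l1dist m₄ m₃ ≤ 1)
    (hb₂ : l1dist c₂ m₃ ≤ l1dist c₁ m₂) (hb₃ : l1dist c₃ m₄ > l1dist c₂ m₃) :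
    (m₄.1 ∈ Set.Icc (x + dx / 2 - 1) (x + dx + 3) ∧
      m₄.2 ∈ Set.Icc (y - 3) (y + (dy + 1) / 2)) ∧
    ∃ a b : ℤ, m₄.1 ∈ Set.Icc a (a + (dx / 2 + 4)) ∧
      m₄.2 ∈ Set.Icc b (b + ((dy + 1) / 2 + 3)) := by
  obtain ⟨hmx, hmy⟩ := hm₁
  obtain ⟨a, ha⟩ := hdxe
  obtain ⟨b, hb⟩ := hdyo
  obtain ⟨u₁, v₁⟩ := m₁
  obtain ⟨u₂, v₂⟩ := m₂
  obtain ⟨u₃, v₃⟩ := m₃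
  obtain ⟨u₄, v₄⟩ := m₄
  subst hpx hpy hc₁ hc₂ hc₃ ha hb
  have e1 : (a + a) / 2 = a := by omega
  have e2 : (2 * b + 1 - 1) / 2 = b := by omega
  have e3 : (2 * b + 1 + 1) / 2 = b + 1 := by omega
  simp only [Set.mem_Icc] at hmx hmy ⊢
  simp only [l1dist, Int.abs_eq_natAbs] at h12 h23 h34 hb₂ hb₃
  simp only [e1, e2, e3] at hb₂ hb₃ ⊢
  clear hdx hdy e1 e2 e3
  have hx1 : x + a - 1 ≤ u₄ := by omega
  have hx2 : u₄ ≤ x + (a + a) + 3 := by omega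
  have hy1 : y - 3 ≤ v₄ := by omega
  have hy2 : v₄ ≤ y + (b + 1) := by omega
  exact ⟨⟨⟨hx1, hx2⟩, hy1, hy2⟩, x + a - 1, y - 3, ⟨by omega, by omega⟩, by omega, by omega⟩
end

section
/- Let Δ be a positive integer, let G be a finite, simple, undirected, connected graph of maximum degree at most Δ with at least two vertices, and let M be a set of vertices of G. Then there is an edge uv of G such that Δ · |{m ∈ M : dist_G(u, m) > dist_G(v, m)}| ≥ |M| − 1 and Δ · |{m ∈ M : dist_G(u, m) < dist_G(v, m)}| ≥ |M| − 1; that is, both sets contain at least (|M| − 1)/Δ vertices. -/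
open SimpleGraph

private lemma step_lemma {V : Type*} [Fintype V] [DecidableEq V]
    (G : SimpleGraph V) (hG : G.Connected) {u m : V} (h : u ≠ m) :
    ∃ v, G.Adj u v ∧ G.dist v m < G.dist u m := by
  obtain ⟨p, hp⟩ := (hG u m).exists_walk_length_eq_dist
  have hpos : 0 < G.dist u m := hG.pos_dist_of_ne h
  cases p with
  | nil => simp at hp hpos
  | cons hadj q =>
    refine ⟨_, hadj, ?_⟩
    have : G.dist _ m ≤ q.length := SimpleGraph.dist_le q
    simp [SimpleGraph.Walk.length_cons] at hp
    omega

/-- In every finite connected graph `G` of maximum degree at most `Δ` with at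
least two vertices, for every set `M` of vertices there is an edge `uv` such
that each of the two sets `{m ∈ M : dist(u, m) > dist(v, m)}` and
`{m ∈ M : dist(u, m) < dist(v, m)}` contains at least `(|M| − 1)/Δ` vertices. -/
theorem balanced_edge_exists {V : Type*} [Fintype V] [DecidableEq V]
    (G : SimpleGraph V) [DecidableRel G.Adj] (hG : G.Connected)
    (hV : 2 ≤ Fintype.card V)
    (Δ : ℕ) (hΔ : 0 < Δ) (hdeg : ∀ v : V, G.degree v ≤ Δ)
    (M : Finset V) :
    ∃ u v : V, G.Adj u v ∧
      M.card - 1 ≤ Δ * (M.filter (fun m => G.dist v m < G.dist u m)).card ∧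
      M.card - 1 ≤ Δ * (M.filter (fun m => G.dist u m < G.dist v m)).card := by
  classical
  have hne : Nonempty V := Fintype.card_pos_iff.mp (by omega)
  obtain ⟨u, -, hu⟩ := Finset.exists_min_image Finset.univ
    (fun x => ∑ m ∈ M, G.dist x m) ⟨Classical.arbitrary V, Finset.mem_univ _⟩
  -- u has a neighbor
  have hnbr : (G.neighborFinset u).Nonempty := by
    obtain ⟨w, hw⟩ := Fintype.exists_ne_of_one_lt_card (by omega) u
    obtain ⟨v, hadj, -⟩ := step_lemma G hG hw.symm
    exact ⟨v, by simpa using hadj⟩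
  -- cover M.erase u by neighbors' filters
  have hcover : M.erase u ⊆ (G.neighborFinset u).biUnion
      (fun v => M.filter (fun m => G.dist v m < G.dist u m)) := by
    intro m hm
    obtain ⟨v, hadj, hlt⟩ := step_lemma G hG (Finset.ne_of_mem_erase hm).symm
    exact Finset.mem_biUnion.mpr ⟨v, by simpa using hadj,
      Finset.mem_filter.mpr ⟨Finset.mem_of_mem_erase hm, hlt⟩⟩
  have hcard : M.card - 1 ≤
      ∑ v ∈ G.neighborFinset u, (M.filter (fun m => G.dist v m < G.dist u m)).card :=
    le_trans Finset.pred_card_le_card_erase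
      (le_trans (Finset.card_le_card hcover) Finset.card_biUnion_le)
  -- choose v maximizing the filter card
  obtain ⟨v, hv, hmax⟩ := Finset.exists_max_image (G.neighborFinset u)
    (fun v => (M.filter (fun m => G.dist v m < G.dist u m)).card) hnbr
  have hadj : G.Adj u v := by simpa using hv
  have h1 : M.card - 1 ≤ Δ * (M.filter (fun m => G.dist v m < G.dist u m)).card := by
    have hsum : ∑ w ∈ G.neighborFinset u, (M.filter (fun m => G.dist w m < G.dist u m)).card
        ≤ (G.neighborFinset u).card * (M.filter (fun m => G.dist v m < G.dist u m)).card :=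
      Finset.sum_le_card_nsmul _ _ _ (fun w hw => hmax w hw)
    have hdegu : (G.neighborFinset u).card ≤ Δ := by
      rw [G.card_neighborFinset_eq_degree u]; exact hdeg u
    calc M.card - 1 ≤ _ := hcard
      _ ≤ _ := hsum
      _ ≤ Δ * _ := Nat.mul_le_mul_right _ hdegu
  refine ⟨u, v, hadj, h1, ?_⟩
  -- second: card set1 ≤ card set2 via minimality
  have key : ∀ m ∈ M, G.dist u m + (if G.dist u m < G.dist v m then 1 else 0)
      = G.dist v m + (if G.dist v m < G.dist u m then 1 else 0) := by
    intro m _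
    have h1 : G.dist u m ≤ G.dist u v + G.dist v m := hG.dist_triangle
    have h2 : G.dist v m ≤ G.dist v u + G.dist u m := hG.dist_triangle
    have huv : G.dist u v = 1 := SimpleGraph.dist_eq_one_iff_adj.mpr hadj
    have hvu : G.dist v u = 1 := SimpleGraph.dist_eq_one_iff_adj.mpr hadj.symm
    split_ifs <;> omega
  have hsum2 : (∑ m ∈ M, G.dist u m) + (M.filter (fun m => G.dist u m < G.dist v m)).card
      = (∑ m ∈ M, G.dist v m) + (M.filter (fun m => G.dist v m < G.dist u m)).card := by
    rw [Finset.card_filter, Finset.card_filter, ← Finset.sum_add_distrib,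
      ← Finset.sum_add_distrib]
    exact Finset.sum_congr rfl key
  have hmin : (∑ m ∈ M, G.dist u m) ≤ ∑ m ∈ M, G.dist v m := hu v (Finset.mem_univ v)
  have hle : (M.filter (fun m => G.dist v m < G.dist u m)).card
      ≤ (M.filter (fun m => G.dist u m < G.dist v m)).card := by omega
  calc M.card - 1 ≤ _ := h1
    _ ≤ _ := Nat.mul_le_mul_left _ hle
end
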